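/- Let C, Γ, ε, a, κ > 0 and B ≥ 0 be constants. Let z : [0, ∞) → ℝ be continuously differentiable and V : [0, ∞) → [0, ∞) be locally absolutely continuous, and suppose that for all t ≥ 0, z'(t) = Γe^{−z(t)}·max(V(t) − ε, 0), and for almost every t ≥ 0, V'(t) ≤ −2C·V(t) + aB/(min(1, κ)(1 + e^{z(t)})). Then for all t ≥ 0: z(0) ≤ z(t) ≤ ln( e^{z(0)} + (Γ/(2C))V(0) + aB·(2C(1 + e^{z(0)}) + εΓ)/(4C²ε·min(1, κ)(1 + e^{z(0)})) ). -/

import Mathlib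

open MeasureTheory

/-- Comparison helper: an FTC-form function that cannot increase while positive
stays nonpositive. -/
lemma dads_aux_nonpos {u u' : ℝ → ℝ} {s0 s1 : ℝ} (h01 : s0 ≤ s1)
    (hcont : ContinuousOn u (Set.Icc s0 s1))
    (hint : IntervalIntegrable u' volume s0 s1)
    (hftc : ∀ s, s0 ≤ s → s ≤ s1 → u s1 - u s = ∫ r in s..s1, u' r)
    (hae : ∀ᵐ r ∂(volume.restrict (Set.Ioc s0 s1)), 0 < u r → u' r ≤ 0)
    (h0 : u s0 ≤ 0) : u s1 ≤ 0 := by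
  set S : Set ℝ := Set.Icc s0 s1 ∩ u ⁻¹' Set.Iic 0 with hSdef
  have hSne : S.Nonempty := ⟨s0, ⟨le_refl _, h01⟩, h0⟩
  have hScl : IsClosed S := hcont.preimage_isClosed_of_isClosed isClosed_Icc isClosed_Iic
  have hbdd : BddAbove S := ⟨s1, fun x hx => hx.1.2⟩
  set c := sSup S with hc
  have hcS : c ∈ S := hScl.csSup_mem hSne hbdd
  have hc0 : s0 ≤ c := hcS.1.1
  have hc1 : c ≤ s1 := hcS.1.2
  have hcu : u c ≤ 0 := hcS.2
  have hpos : ∀ r ∈ Set.Ioc c s1, 0 < u r := by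
    intro r hr
    by_contra h
    push_neg at h
    have hrS : r ∈ S := ⟨⟨hc0.trans hr.1.le, hr.2⟩, h⟩
    exact absurd (le_csSup hbdd hrS) (not_le.mpr hr.1)
  have hae2 : ∀ᵐ r ∂(volume.restrict (Set.Ioc c s1)), u' r ≤ 0 := by
    have h1 : ∀ᵐ r ∂(volume.restrict (Set.Ioc c s1)), 0 < u r → u' r ≤ 0 :=
      ae_restrict_of_ae_restrict_of_subset (Set.Ioc_subset_Ioc_left hc0) hae
    filter_upwards [h1, ae_restrict_mem measurableSet_Ioc] with r h1r hr
    exact h1r (hpos r hr)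
  have hintc : IntervalIntegrable u' volume c s1 :=
    hint.mono_set (Set.uIcc_subset_uIcc (by rw [Set.uIcc_of_le h01]; exact ⟨hc0, hc1⟩)
      (by rw [Set.uIcc_of_le h01]; exact ⟨h01, le_refl _⟩))
  have hkey : ∫ r in c..s1, u' r ≤ 0 := by
    have h2 : ∀ᵐ r ∂(volume.restrict (Set.Icc c s1)), u' r ≤ 0 := by
      rwa [← MeasureTheory.restrict_Ioc_eq_restrict_Icc]
    have h3 := intervalIntegral.integral_mono_ae_restrict hc1 hintc
      (intervalIntegrable_const (c := (0:ℝ))) h2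
    simpa using h3
  have := hftc c hc0 hc1
  linarith

lemma dads_mono (Γ ε : ℝ) (z V : ℝ → ℝ)
    (hz : ∀ s, 0 ≤ s → HasDerivAt z (Γ * Real.exp (-z s) * max (V s - ε) 0) s)
    (hΓ : 0 < Γ) : MonotoneOn z (Set.Ici 0) := by
  apply monotoneOn_of_deriv_nonneg (convex_Ici 0)
    (fun s hs => (hz s hs).continuousAt.continuousWithinAt)
  · intro s hs
    rw [interior_Ici] at hs
    exact ((hz s (le_of_lt hs)).differentiableAt).differentiableWithinAt
  · intro s hs
    rw [interior_Ici] at hs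
    rw [(hz s (le_of_lt hs)).deriv]
    positivity

lemma dads_aux_main (C Γ ε m b : ℝ) (hC : 0 < C) (hΓ : 0 < Γ) (hε : 0 < ε) (hm : 0 < m)
    (hb : 0 ≤ b) (z V V' : ℝ → ℝ)
    (hz : ∀ s, 0 ≤ s → HasDerivAt z (Γ * Real.exp (-z s) * max (V s - ε) 0) s)
    (hVnonneg : ∀ s, 0 ≤ s → 0 ≤ V s)
    (hV'int : ∀ T, 0 ≤ T → IntervalIntegrable V' volume 0 T)
    (hVftc : ∀ s t, 0 ≤ s → s ≤ t → V t - V s = ∫ r in s..t, V' r)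
    (hV' : ∀ᵐ s ∂(volume.restrict (Set.Ici (0:ℝ))),
      V' s ≤ -2 * C * V s + b / (m * (1 + Real.exp (z s))))
    (t : ℝ) (ht : 0 ≤ t) :
    Real.exp (z t) ≤ Real.exp (z 0) + b / (2 * C * ε * m) +
      (Γ / (2 * C) * V 0 + Γ * (b / (m * (1 + Real.exp (z 0)))) / (2 * C * (2 * C))) := by
  have h2C : (0:ℝ) < 2 * C := by linarith
  set w : ℝ → ℝ := fun s => Real.exp (z s) with hw_def
  have hwpos : ∀ s, 0 < w s := fun s => Real.exp_pos _
  -- derivative of w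
  have hwd : ∀ s, 0 ≤ s → HasDerivAt w (Γ * max (V s - ε) 0) s := by
    intro s hs
    have h := (hz s hs).exp
    have heq : Real.exp (z s) * (Γ * Real.exp (-z s) * max (V s - ε) 0)
        = Γ * max (V s - ε) 0 := by
      rw [Real.exp_neg]
      have := Real.exp_pos (z s)
      field_simp
    rwa [heq] at h
  -- monotonicity of w
  have hzc : ∀ s, 0 ≤ s → ContinuousAt z s := fun s hs => (hz s hs).continuousAt
  have hzmono : MonotoneOn z (Set.Ici 0) := dads_mono Γ ε z V hz hΓ
  have hwmono : ∀ s₁ s₂, 0 ≤ s₁ → s₁ ≤ s₂ → w s₁ ≤ w s₂ := fun s₁ s₂ h1 h2 =>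
    Real.exp_le_exp.mpr (hzmono (Set.mem_Ici.mpr h1) (Set.mem_Ici.mpr (h1.trans h2)) h2)
  have hwcont : ∀ s, 0 ≤ s → ContinuousAt w s := fun s hs =>
    Real.continuous_exp.continuousAt.comp (hzc s hs)
  -- continuity of V
  have hVcont : ContinuousOn V (Set.Icc 0 t) := by
    have h1 : ContinuousOn (fun s => V 0 + ∫ r in (0:ℝ)..s, V' r) (Set.Icc 0 t) := by
      apply continuousOn_const.add
      have h2 := intervalIntegral.continuousOn_primitive_interval'
        (hV'int t ht) (Set.left_mem_uIcc (a := (0:ℝ)) (b := t))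
      rwa [Set.uIcc_of_le ht] at h2
    apply h1.congr
    intro s hs
    have h3 := hVftc 0 s le_rfl hs.1
    show V s = V 0 + ∫ r in (0:ℝ)..s, V' r
    linarith
  set M0 : ℝ := b / (m * (1 + w 0)) with hM0_def
  have hM00 : 0 ≤ M0 := by positivity
  set P : ℝ := b / (2 * C * ε * m) with hP_def
  have hP0 : 0 ≤ P := by positivity
  have hV00 := hVnonneg 0 le_rfl
  -- pointwise bound on V
  have hVbd : ∀ s, 0 ≤ s → s ≤ t → V s ≤ V 0 + M0 / (2 * C) := by
    intro s hs hst
    have hD : 2 * C * (V 0 + M0 / (2 * C)) = 2 * C * V 0 + M0 := by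
      field_simp
    have key : (fun r => V r - (V 0 + M0 / (2 * C))) s ≤ 0 := by
      apply dads_aux_nonpos (u' := V') hs
      · exact ((hVcont.mono (Set.Icc_subset_Icc le_rfl hst)).sub continuousOn_const)
      · exact (hV'int t ht).mono_set
          (by rw [Set.uIcc_of_le hs, Set.uIcc_of_le ht]; exact Set.Icc_subset_Icc le_rfl hst)
      · intro r hr hrs
        have h3 := hVftc r s hr hrs
        linarith
      · have h1 : ∀ᵐ r ∂(volume.restrict (Set.Ioc 0 s)),
            V' r ≤ -2 * C * V r + b / (m * (1 + Real.exp (z r))) :=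
          ae_restrict_of_ae_restrict_of_subset (fun r hr => le_of_lt hr.1) hV'
        filter_upwards [h1, ae_restrict_mem measurableSet_Ioc] with r h1r hr hpos
        have hw0r : w 0 ≤ w r := hwmono 0 r le_rfl hr.1.le
        have hbound : b / (m * (1 + Real.exp (z r))) ≤ M0 := by
          rw [hM0_def]
          have hwr : (0:ℝ) < 1 + w 0 := by positivity
          gcongr
        have hmul : 2 * C * (V 0 + M0 / (2 * C)) < 2 * C * V r :=
          mul_lt_mul_of_pos_left (by linarith) h2C
        have h6 : (0:ℝ) ≤ 2 * C * V 0 := mul_nonneg (by linarith) hV00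
        linarith
      · have : (0:ℝ) ≤ M0 / (2 * C) := by positivity
        linarith
    linarith
  -- case split on whether the gain ever reaches the threshold level
  set S : Set ℝ := Set.Icc 0 t ∩ (fun s => 1 + w s) ⁻¹' Set.Ici P with hS_def
  by_cases hSne : S.Nonempty
  · -- τ = first time the threshold is reached
    have hScl : IsClosed S := by
      apply ContinuousOn.preimage_isClosed_of_isClosed ?_ isClosed_Icc isClosed_Ici
      exact fun s hs => (continuousAt_const.add (hwcont s hs.1)).continuousWithinAt
    have hbddS : BddBelow S := ⟨0, fun x hx => hx.1.1⟩
    set τ := sInf S with hτ_def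
    have hτS : τ ∈ S := hScl.csInf_mem hSne hbddS
    have hτ0 : 0 ≤ τ := hτS.1.1
    have hτt : τ ≤ t := hτS.1.2
    have hτP : P ≤ 1 + w τ := hτS.2
    -- bound on w τ
    have hwτ : w τ ≤ w 0 + P := by
      rcases eq_or_lt_of_le hτ0 with h | h
      · rw [← h]; linarith [hwpos 0]
      · have hlt : ∀ s, 0 ≤ s → s < τ → 1 + w s < P := by
          intro s hs hsτ
          by_contra hcon
          push_neg at hcon
          have hsS : s ∈ S := ⟨⟨hs, hsτ.le.trans hτt⟩, hcon⟩
          exact absurd (csInf_le hbddS hsS) (not_le.mpr hsτ)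
        have htend : Filter.Tendsto w (nhdsWithin τ (Set.Iio τ)) (nhds (w τ)) :=
          ((hwcont τ hτ0).tendsto).mono_left nhdsWithin_le_nhds
        have hle : w τ ≤ P - 1 := by
          apply le_of_tendsto htend
          filter_upwards [Ioo_mem_nhdsLT h] with s hs
          linarith [hlt s hs.1.le hs.2]
        linarith [hwpos 0]
    -- exponential decay of V - ε after τ
    have hdecay : ∀ s, τ ≤ s → s ≤ t →
        V s - ε ≤ V τ * Real.exp (-(2 * C) * (s - τ)) := by
      intro s hτs hst
      have hs0 : 0 ≤ s := hτ0.trans hτs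
      have hVτ : 0 ≤ V τ := hVnonneg τ hτ0
      have hF : ∀ r, HasDerivAt (fun x => -(V τ) * Real.exp (-(2 * C) * (x - τ)))
          (2 * C * V τ * Real.exp (-(2 * C) * (r - τ))) r := by
        intro r
        have h1 : HasDerivAt (fun x : ℝ => -(2 * C) * (x - τ)) (-(2 * C)) r := by
          simpa using ((hasDerivAt_id r).sub_const τ).const_mul (-(2 * C))
        have h3 := h1.exp.const_mul (-(V τ))
        refine h3.congr_deriv ?_
        ring
      have hFcont : Continuous fun r => 2 * C * V τ * Real.exp (-(2 * C) * (r - τ)) :=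
        continuous_const.mul (Real.continuous_exp.comp
          (continuous_const.mul (continuous_id.sub continuous_const)))
      have hFint : ∀ r₁ r₂ : ℝ, IntervalIntegrable
          (fun r => 2 * C * V τ * Real.exp (-(2 * C) * (r - τ))) volume r₁ r₂ :=
        fun r₁ r₂ => hFcont.intervalIntegrable r₁ r₂
      have key : (fun r => V r - ε - V τ * Real.exp (-(2 * C) * (r - τ))) s ≤ 0 := by
        apply dads_aux_nonpos
          (u' := fun r => V' r + 2 * C * V τ * Real.exp (-(2 * C) * (r - τ))) hτs
        · apply ContinuousOn.sub
          · exact (hVcont.mono (Set.Icc_subset_Icc hτ0 hst)).sub continuousOn_const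
          · exact (continuous_const.mul (Real.continuous_exp.comp
              (continuous_const.mul (continuous_id.sub continuous_const)))).continuousOn
        · apply IntervalIntegrable.add ?_ (hFint τ s)
          exact (hV'int t ht).mono_set
            (by rw [Set.uIcc_of_le hτs, Set.uIcc_of_le ht]; exact Set.Icc_subset_Icc hτ0 hst)
        · intro r hr hrs
          have hr0 : 0 ≤ r := hτ0.trans hr
          have h3 := hVftc r s hr0 hrs
          have h4 : ∫ x in r..s, 2 * C * V τ * Real.exp (-(2 * C) * (x - τ))
              = (-(V τ) * Real.exp (-(2 * C) * (s - τ)))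
                - (-(V τ) * Real.exp (-(2 * C) * (r - τ))) :=
            intervalIntegral.integral_eq_sub_of_hasDerivAt (fun x _ => hF x) (hFint r s)
          have h5 : ∫ x in r..s, (V' x + 2 * C * V τ * Real.exp (-(2 * C) * (x - τ)))
              = (∫ x in r..s, V' x)
                + ∫ x in r..s, 2 * C * V τ * Real.exp (-(2 * C) * (x - τ)) := by
            apply intervalIntegral.integral_add ?_ (hFint r s)
            exact (hV'int t ht).mono_set
              (by rw [Set.uIcc_of_le hrs, Set.uIcc_of_le ht]
                  exact Set.Icc_subset_Icc hr0 hst)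
          rw [h5, h4]
          linarith
        · have h1 : ∀ᵐ r ∂(volume.restrict (Set.Ioc τ s)),
              V' r ≤ -2 * C * V r + b / (m * (1 + Real.exp (z r))) :=
            ae_restrict_of_ae_restrict_of_subset (fun r hr => hτ0.trans_lt hr.1 |>.le) hV'
          filter_upwards [h1, ae_restrict_mem measurableSet_Ioc] with r h1r hr hpos
          have hwτr : w τ ≤ w r := hwmono τ r hτ0 hr.1.le
          have hbound : b / (m * (1 + Real.exp (z r))) ≤ 2 * C * ε := by
            rw [div_le_iff₀ (by positivity)]
            have hPb : 2 * C * ε * (m * P) = b := by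
              rw [hP_def]; field_simp
            calc b = 2 * C * ε * (m * P) := hPb.symm
              _ ≤ 2 * C * ε * (m * (1 + Real.exp (z r))) := by
                  have : (P:ℝ) ≤ 1 + Real.exp (z r) := le_trans hτP (by
                    have := hwτr; simp only [hw_def] at this ⊢; linarith)
                  gcongr
          have hmul : 0 < 2 * C * (V r - ε - V τ * Real.exp (-(2 * C) * (r - τ))) :=
            mul_pos h2C hpos
          nlinarith
        · simp only [sub_self, neg_mul, mul_zero, neg_zero, Real.exp_zero, mul_one]
          linarith
      simpa using key
    -- FTC for w on [τ, t]
    have hwint : IntervalIntegrable (fun s => Γ * max (V s - ε) 0) volume τ t := by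
      apply ContinuousOn.intervalIntegrable
      rw [Set.uIcc_of_le hτt]
      exact continuousOn_const.mul
        (((hVcont.mono (Set.Icc_subset_Icc hτ0 le_rfl)).sub continuousOn_const).sup'
          continuousOn_const)
    have hwftc : w t - w τ = ∫ s in τ..t, Γ * max (V s - ε) 0 :=
      (intervalIntegral.integral_eq_sub_of_hasDerivAt
        (fun s hs => hwd s (by rw [Set.uIcc_of_le hτt] at hs; exact hτ0.trans hs.1)) hwint).symm
    -- bound the integral by the decaying exponential
    have hVτbd : V τ ≤ V 0 + M0 / (2 * C) := hVbd τ hτ0 hτt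
    have hVτ0 : 0 ≤ V τ := hVnonneg τ hτ0
    have hGd : ∀ r, HasDerivAt (fun x => -(Γ * V τ / (2 * C)) * Real.exp (-(2 * C) * (x - τ)))
        (Γ * (V τ * Real.exp (-(2 * C) * (r - τ)))) r := by
      intro r
      have h1 : HasDerivAt (fun x : ℝ => -(2 * C) * (x - τ)) (-(2 * C)) r := by
        simpa using ((hasDerivAt_id r).sub_const τ).const_mul (-(2 * C))
      have h3 := h1.exp.const_mul (-(Γ * V τ / (2 * C)))
      refine h3.congr_deriv ?_
      field_simp
    have hGcont : Continuous fun r => Γ * (V τ * Real.exp (-(2 * C) * (r - τ))) :=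
      continuous_const.mul (continuous_const.mul (Real.continuous_exp.comp
        (continuous_const.mul (continuous_id.sub continuous_const))))
    have hint2 : ∫ s in τ..t, Γ * max (V s - ε) 0 ≤ Γ * V τ / (2 * C) := by
      have hmono : ∫ s in τ..t, Γ * max (V s - ε) 0
          ≤ ∫ s in τ..t, Γ * (V τ * Real.exp (-(2 * C) * (s - τ))) := by
        apply intervalIntegral.integral_mono_on hτt hwint
          (hGcont.intervalIntegrable τ t)
        intro s hs
        have h1 : max (V s - ε) 0 ≤ V τ * Real.exp (-(2 * C) * (s - τ)) := by
          apply max_le (hdecay s hs.1 hs.2) (by positivity)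
        exact mul_le_mul_of_nonneg_left h1 hΓ.le
      have heval : ∫ s in τ..t, Γ * (V τ * Real.exp (-(2 * C) * (s - τ)))
          = -(Γ * V τ / (2 * C)) * Real.exp (-(2 * C) * (t - τ))
            - (-(Γ * V τ / (2 * C)) * Real.exp (-(2 * C) * (τ - τ))) :=
        intervalIntegral.integral_eq_sub_of_hasDerivAt (fun x _ => hGd x)
          (hGcont.intervalIntegrable τ t)
      have hexp1 : Real.exp (-(2 * C) * (τ - τ)) = 1 := by
        simp
      have hexp2 : 0 < Real.exp (-(2 * C) * (t - τ)) := Real.exp_pos _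
      have hcoef : 0 ≤ Γ * V τ / (2 * C) := by positivity
      calc ∫ s in τ..t, Γ * max (V s - ε) 0
          ≤ ∫ s in τ..t, Γ * (V τ * Real.exp (-(2 * C) * (s - τ))) := hmono
        _ = -(Γ * V τ / (2 * C)) * Real.exp (-(2 * C) * (t - τ))
            - (-(Γ * V τ / (2 * C)) * Real.exp (-(2 * C) * (τ - τ))) := heval
        _ ≤ Γ * V τ / (2 * C) := by rw [hexp1]; nlinarith
    -- combine
    have hwt : w t ≤ w τ + Γ * V τ / (2 * C) := by linarith
    have hstep : Γ * V τ / (2 * C) ≤ Γ / (2 * C) * V 0 + Γ * M0 / (2 * C * (2 * C)) := by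
      have h1 : Γ * V τ ≤ Γ * (V 0 + M0 / (2 * C)) := mul_le_mul_of_nonneg_left hVτbd hΓ.le
      have h2 : Γ * (V 0 + M0 / (2 * C)) / (2 * C)
          = Γ / (2 * C) * V 0 + Γ * M0 / (2 * C * (2 * C)) := by
        field_simp
      calc Γ * V τ / (2 * C) ≤ Γ * (V 0 + M0 / (2 * C)) / (2 * C) := by gcongr
        _ = _ := h2
    show w t ≤ w 0 + P + (Γ / (2 * C) * V 0 + Γ * M0 / (2 * C * (2 * C)))
    linarith
  · -- threshold never reached: w stays below P
    have hnt : ¬ (P ≤ 1 + w t) := by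
      intro hcon
      exact hSne ⟨t, ⟨⟨ht, le_rfl⟩, hcon⟩⟩
    push_neg at hnt
    have h1 : 0 ≤ Γ / (2 * C) * V 0 := by positivity
    have h2 : 0 ≤ Γ * M0 / (2 * C * (2 * C)) := by positivity
    show w t ≤ w 0 + P + (Γ / (2 * C) * V 0 + Γ * M0 / (2 * C * (2 * C)))
    have := hwpos 0
    linarith


/-- The gain-boundedness lemma (Lemma 4.1 of [15]): if `z` is `C¹` with
`z'(t) = Γe^{−z(t)}·(V(t) − ε)⁺` and the locally absolutely continuous nonnegative `V`
satisfies `V'(t) ≤ −2C·V(t) + aB/(min(1, κ)(1 + e^{z(t)}))` a.e., then for all `t ≥ 0`,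
`z(0) ≤ z(t) ≤ ln( e^{z(0)} + (Γ/(2C))V(0) + aB(2C(1 + e^{z(0)}) + εΓ)/(4C²ε min(1,κ)(1 + e^{z(0)})) )`.
Local absolute continuity of `V` is encoded by the fundamental theorem of calculus with a
locally integrable a.e. derivative `V'`. -/
theorem dads_gain_bound (C Γ ε a κ B : ℝ)
    (hC : 0 < C) (hΓ : 0 < Γ) (hε : 0 < ε) (ha : 0 < a) (hκ : 0 < κ) (hB : 0 ≤ B)
    (z : ℝ → ℝ) (V V' : ℝ → ℝ)
    (hz : ∀ t, 0 ≤ t → HasDerivAt z (Γ * Real.exp (-z t) * max (V t - ε) 0) t)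
    (hVnonneg : ∀ t, 0 ≤ t → 0 ≤ V t)
    (hV'int : ∀ T, 0 ≤ T → IntervalIntegrable V' volume 0 T)
    (hVftc : ∀ s t, 0 ≤ s → s ≤ t → V t - V s = ∫ r in s..t, V' r)
    (hV' : ∀ᵐ t ∂(volume.restrict (Set.Ici (0 : ℝ))),
      V' t ≤ -2 * C * V t + a * B / (min 1 κ * (1 + Real.exp (z t)))) :
    ∀ t, 0 ≤ t →
      z 0 ≤ z t ∧
      z t ≤ Real.log (Real.exp (z 0) + (Γ / (2 * C)) * V 0 +
        a * B * (2 * C * (1 + Real.exp (z 0)) + ε * Γ) /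
          (4 * C ^ 2 * ε * min 1 κ * (1 + Real.exp (z 0)))) := by
  intro t ht
  have hm : (0:ℝ) < min 1 κ := lt_min one_pos hκ
  have hzmono := dads_mono Γ ε z V hz hΓ
  refine ⟨hzmono (Set.mem_Ici.mpr le_rfl) (Set.mem_Ici.mpr ht) ht, ?_⟩
  have h := dads_aux_main C Γ ε (min 1 κ) (a * B) hC hΓ hε hm
    (mul_nonneg ha.le hB) z V V' hz hVnonneg hV'int hVftc hV' t ht
  have hexp0 : (0:ℝ) < 1 + Real.exp (z 0) := by positivity
  have heq : Real.exp (z 0) + a * B / (2 * C * ε * min 1 κ) +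
      (Γ / (2 * C) * V 0 +
        Γ * (a * B / (min 1 κ * (1 + Real.exp (z 0)))) / (2 * C * (2 * C)))
      = Real.exp (z 0) + Γ / (2 * C) * V 0 +
        a * B * (2 * C * (1 + Real.exp (z 0)) + ε * Γ) /
          (4 * C ^ 2 * ε * min 1 κ * (1 + Real.exp (z 0))) := by
    field_simp
    ring
  rw [heq] at h
  have hpos : (0:ℝ) < Real.exp (z 0) + Γ / (2 * C) * V 0 +
      a * B * (2 * C * (1 + Real.exp (z 0)) + ε * Γ) /
        (4 * C ^ 2 * ε * min 1 κ * (1 + Real.exp (z 0))) := by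
    have t1 : (0:ℝ) < Real.exp (z 0) := Real.exp_pos _
    have t2 : (0:ℝ) ≤ Γ / (2 * C) * V 0 :=
      mul_nonneg (by positivity) (hVnonneg 0 le_rfl)
    have t3 : (0:ℝ) ≤ a * B * (2 * C * (1 + Real.exp (z 0)) + ε * Γ) /
        (4 * C ^ 2 * ε * min 1 κ * (1 + Real.exp (z 0))) :=
      div_nonneg (mul_nonneg (mul_nonneg ha.le hB) (by positivity)) (by positivity)
    linarith
  exact (Real.le_log_iff_exp_le hpos).mpr h
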